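/- Let ψ : V → {1,2,3} be a map that is not a three-coloring of G (i.e., there is an edge {u,v} ∈ E with ψ(u) = ψ(v)), let 𝒱 = {(v, ψ(v)) : v ∈ V}, and let S be the submatrix of M(G) with columns indexed by 𝒱. Then for every matrix A with rows indexed by 𝒱 and columns indexed by (V × {1,2,3}) ⊔ E one has ‖M(G) − SA‖ > √(m t² + 4 n t⁶ + m t¹⁰). -/

import Mathlib

open Matrix

/-- The Frobenius norm of a real matrix: the square root of the sum of squares of entries. -/
noncomputable def frob {α β : Type*} [Fintype α] [Fintype β] (X : Matrix α β ℝ) : ℝ :=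
  Real.sqrt (∑ i, ∑ j, X i j ^ 2)

/-- The matrix `M(G)` of the reduction: rows indexed by `V ⊕ {1,2,3} ⊕ {ε}`,
columns indexed by `(V × {1,2,3}) ⊕ E`. -/
def MG {V : Type*} [Fintype V] [DecidableEq V] (G : SimpleGraph V) [DecidableRel G.Adj]
    (t : ℝ) : Matrix (V ⊕ Fin 3 ⊕ Unit) ((V × Fin 3) ⊕ G.edgeSet) ℝ :=
  fun r c =>
    match r, c with
    | Sum.inl u, Sum.inl (v, _) => if u = v then (1 : ℝ) else 0
    | Sum.inl u, Sum.inr e => if u ∈ (e : Sym2 V) then t ^ 2 else 0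
    | Sum.inr (Sum.inl i), Sum.inl (_, j) => if i = j then t ^ 3 else 0
    | Sum.inr (Sum.inl _), Sum.inr _ => t ^ 5
    | Sum.inr (Sum.inr _), Sum.inl _ => 0
    | Sum.inr (Sum.inr _), Sum.inr _ => t

/-- Quadratic minimization: if `|s| ≤ n` then
`∑ b w ^ 2 + ε (d - ∑ b w)^2 ≥ ε d² / (1 + n ε)`. -/
lemma class_key {ι : Type*} (s : Finset ι) (n : ℕ) (hn : 1 ≤ n) (hs : s.card ≤ n)
    (b : ι → ℝ) (ε d : ℝ) (hε : 0 < ε) :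
    ε * d ^ 2 / (1 + n * ε) ≤ (∑ w ∈ s, b w ^ 2) + ε * (d - ∑ w ∈ s, b w) ^ 2 := by
  have hden : (0:ℝ) < 1 + n * ε := by positivity
  rw [div_le_iff₀ hden]
  set B := ∑ w ∈ s, b w with hB
  set Q := ∑ w ∈ s, b w ^ 2 with hQ
  have hQ0 : 0 ≤ Q := Finset.sum_nonneg fun w _ => sq_nonneg _
  have h1 : B ^ 2 ≤ n * Q := by
    calc B ^ 2 ≤ s.card * Q := sq_sum_le_card_mul_sum_sq
    _ ≤ n * Q := by
      apply mul_le_mul_of_nonneg_right _ hQ0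
      exact_mod_cast hs
  have hn' : (1:ℝ) ≤ n := by exact_mod_cast hn
  nlinarith [sq_nonneg (B - (n:ℝ) * ε * (d - B)), mul_le_mul_of_nonneg_left h1 hε.le,
    mul_nonneg hε.le (sq_nonneg (d - B)), sq_nonneg (d - B), hε.le]

lemma class_key' {ι : Type*} (s : Finset ι) (n : ℕ) (hn : 1 ≤ n) (hs : s.card ≤ n)
    (cw a : ι → ℝ) (t σ : ℝ) (ht : 0 < t) :
    t ^ 6 / (1 + n * t ^ 6) * (σ - ∑ w ∈ s, cw w) ^ 2 ≤
      (∑ w ∈ s, (cw w - a w) ^ 2) + (t ^ 3 * σ - t ^ 3 * ∑ w ∈ s, a w) ^ 2 := by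
  have h := class_key s n hn hs (fun w => a w - cw w) (t ^ 6) (σ - ∑ w ∈ s, cw w)
    (by positivity)
  have hsub : ∑ w ∈ s, (a w - cw w) = (∑ w ∈ s, a w) - ∑ w ∈ s, cw w :=
    Finset.sum_sub_distrib _ _
  have hsq : ∑ w ∈ s, (a w - cw w) ^ 2 = ∑ w ∈ s, (cw w - a w) ^ 2 :=
    Finset.sum_congr rfl fun w _ => by ring
  rw [hsub, hsq] at h
  rw [div_mul_eq_mul_div]
  refine h.trans (le_of_eq ?_)
  ring

lemma fin3_vert (i p : Fin 3) (hip : i ≠ p) :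
    (2:ℝ) ≤ ∑ j : Fin 3, ((if j = i then (1:ℝ) else 0) - (if p = j then 1 else 0)) ^ 2 := by
  fin_cases i <;> fin_cases p <;> simp_all [Fin.sum_univ_three] <;> norm_num

lemma fin3_edge (p q : Fin 3) :
    (if p = q then (3:ℝ) else 1) ≤
      ∑ j : Fin 3, ((1:ℝ) - (if p = j then 1 else 0) - (if q = j then 1 else 0)) ^ 2 := by
  fin_cases p <;> fin_cases q <;> simp [Fin.sum_univ_three] <;> norm_num

lemma fin3_count (p : Fin 3) (x : ℝ) :
    ∑ i : Fin 3, (if i = p then 0 else x) = 2 * x := by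
  fin_cases p <;> simp [Fin.sum_univ_three] <;> ring

set_option maxHeartbeats 1000000 in
/-- If `ψ : V → {1,2,3}` is not a three-coloring of `G` and `S` is the submatrix of `M(G)`
with columns indexed by `𝒱 = {(v, ψ(v)) : v ∈ V}`, then for every matrix `A` one has
`‖M(G) - S A‖ > √(m t² + 4 n t⁶ + m t¹⁰)`. -/
theorem non_coloring_exceeds_threshold
    {V : Type*} [Fintype V] [DecidableEq V] (G : SimpleGraph V) [DecidableRel G.Adj]
    (n m : ℕ) (hn : n = Fintype.card V) (hm : m = G.edgeFinset.card)
    (hn1 : 1 ≤ n) (hm1 : 1 ≤ m)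
    (t : ℝ) (ht : t = 1 / (4 * (m + n) ^ 3))
    (ψ : V → Fin 3) (hψ : ∃ u v : V, G.Adj u v ∧ ψ u = ψ v)
    (S : Matrix (V ⊕ Fin 3 ⊕ Unit) V ℝ)
    (hS : S = Matrix.of fun r (v : V) => MG G t r (Sum.inl (v, ψ v)))
    (A : Matrix V ((V × Fin 3) ⊕ G.edgeSet) ℝ) :
    frob (MG G t - S * A) >
      Real.sqrt (m * t ^ 2 + 4 * n * t ^ 6 + m * t ^ 10) := by
  classical
  obtain ⟨u₀, v₀, hadj, hcol⟩ := hψ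
  -- numerical facts about t
  have hmn2 : (2:ℝ) ≤ (m:ℝ) + (n:ℝ) := by
    have h1 : (1:ℝ) ≤ (m:ℝ) := by exact_mod_cast hm1
    have h2 : (1:ℝ) ≤ (n:ℝ) := by exact_mod_cast hn1
    linarith
  have hm0 : (0:ℝ) ≤ (m:ℝ) := Nat.cast_nonneg m
  have hn0 : (0:ℝ) ≤ (n:ℝ) := Nat.cast_nonneg n
  have hmn0 : (0:ℝ) < (m:ℝ) + (n:ℝ) := by linarith
  have hs3 : (0:ℝ) < 4 * ((m:ℝ) + (n:ℝ)) ^ 3 := by positivity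
  have hq1 : (0:ℝ) ≤ (((m:ℝ) + n) - 2) * (((m:ℝ) + n) * ((m:ℝ) + n)) :=
    mul_nonneg (by linarith) (by positivity)
  have hq2 : (0:ℝ) ≤ (((m:ℝ) + n) - 2) * ((m:ℝ) + n) :=
    mul_nonneg (by linarith) (by positivity)
  have ht0 : 0 < t := by rw [ht]; positivity
  have hnt : (n:ℝ) * t ≤ 1 / 16 := by
    rw [ht, mul_one_div, div_le_div_iff₀ hs3 (by norm_num)]
    nlinarith [hq1, hq2]
  have hmt : (m:ℝ) * t ≤ 1 / 16 := by
    rw [ht, mul_one_div, div_le_div_iff₀ hs3 (by norm_num)]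
    nlinarith [hq1, hq2]
  have ht1 : t ≤ 1 := by
    rw [ht, div_le_one hs3]
    nlinarith [hq1, hq2]
  -- the error matrix
  set R := MG G t - S * A with hR
  have hRv : ∀ (w : V) c, R (Sum.inl w) c = MG G t (Sum.inl w) c - A w c := by
    intro w c
    simp [hR, Matrix.sub_apply, Matrix.mul_apply, hS, MG, ite_mul]
  have hRc : ∀ (j : Fin 3) c, R (Sum.inr (Sum.inl j)) c
      = MG G t (Sum.inr (Sum.inl j)) c
        - t ^ 3 * ∑ w ∈ Finset.univ.filter (fun w => ψ w = j), A w c := by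
    intro j c
    have hw : ∀ w : V, ((if j = ψ w then t ^ 3 else 0) * A w c)
        = if ψ w = j then t ^ 3 * A w c else 0 := by
      intro w
      rcases eq_or_ne (ψ w) j with h | h
      · simp [h]
      · simp [h, h.symm]
    simp only [hR, Matrix.sub_apply, Matrix.mul_apply, hS, Matrix.of_apply, MG]
    rw [Finset.sum_congr rfl fun w _ => hw w, ← Finset.sum_filter, Finset.mul_sum]
  have hRe : ∀ c, R (Sum.inr (Sum.inr ())) c = MG G t (Sum.inr (Sum.inr ())) c := by
    intro c
    simp [hR, Matrix.sub_apply, Matrix.mul_apply, hS, MG]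
  -- column sums
  have hcolsum : ∀ c, (∑ r, R r c ^ 2) =
      (∑ j : Fin 3,
        ((∑ w ∈ Finset.univ.filter (fun w => ψ w = j), (MG G t (Sum.inl w) c - A w c) ^ 2)
          + (MG G t (Sum.inr (Sum.inl j)) c
              - t ^ 3 * ∑ w ∈ Finset.univ.filter (fun w => ψ w = j), A w c) ^ 2))
      + MG G t (Sum.inr (Sum.inr ())) c ^ 2 := by
    intro c
    rw [Fintype.sum_sum_type, Fintype.sum_sum_type]
    rw [Finset.sum_add_distrib]
    have h1 : ∑ w : V, R (Sum.inl w) c ^ 2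
        = ∑ j : Fin 3, ∑ w ∈ Finset.univ.filter (fun w => ψ w = j),
            (MG G t (Sum.inl w) c - A w c) ^ 2 := by
      rw [← Finset.sum_fiberwise Finset.univ ψ (fun w => R (Sum.inl w) c ^ 2)]
      exact Finset.sum_congr rfl fun j _ => Finset.sum_congr rfl fun w _ => by rw [hRv]
    have h2 : ∀ j : Fin 3, R (Sum.inr (Sum.inl j)) c ^ 2
        = (MG G t (Sum.inr (Sum.inl j)) c
            - t ^ 3 * ∑ w ∈ Finset.univ.filter (fun w => ψ w = j), A w c) ^ 2 := by
      intro j; rw [hRc]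
    have h3 : ∑ u : Unit, R (Sum.inr (Sum.inr u)) c ^ 2
        = MG G t (Sum.inr (Sum.inr ())) c ^ 2 := by
      simp [hRe]
    rw [h1, h3, Finset.sum_congr rfl fun j _ => h2 j]
    ring
  have hF : ∀ j : Fin 3, (Finset.univ.filter (fun w => ψ w = j)).card ≤ n := by
    intro j
    rw [hn, ← Finset.card_univ]
    exact Finset.card_filter_le _ _
  set κ : ℝ := t ^ 6 / (1 + n * t ^ 6) with hκ
  have hden : (0:ℝ) < 1 + n * t ^ 6 := by positivity
  have hκ0 : 0 < κ := div_pos (by positivity) hden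
  -- vertex-column lower bound
  have hvert : ∀ (v : V) (i : Fin 3),
      (if i = ψ v then 0 else 2 * κ) ≤ ∑ r, R r (Sum.inl (v, i)) ^ 2 := by
    intro v i
    rcases eq_or_ne i (ψ v) with hiv | hiv
    · rw [if_pos hiv]
      exact Finset.sum_nonneg fun r _ => sq_nonneg _
    rw [if_neg hiv, hcolsum (Sum.inl (v, i))]
    simp only [MG]
    have hterm : ∀ j : Fin 3,
        κ * ((if j = i then (1:ℝ) else 0) - (if ψ v = j then 1 else 0)) ^ 2 ≤
          (∑ w ∈ Finset.univ.filter (fun w => ψ w = j),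
              ((if w = v then (1:ℝ) else 0) - A w (Sum.inl (v, i))) ^ 2)
            + ((if j = i then t ^ 3 else 0)
                - t ^ 3 * ∑ w ∈ Finset.univ.filter (fun w => ψ w = j),
                    A w (Sum.inl (v, i))) ^ 2 := by
      intro j
      have hK : ∑ w ∈ Finset.univ.filter (fun w => ψ w = j),
          (if w = v then (1:ℝ) else 0) = (if ψ v = j then 1 else 0) := by
        rw [Finset.sum_ite_eq' (Finset.univ.filter (fun w => ψ w = j)) v (fun _ => (1:ℝ))]
        simp [Finset.mem_filter]
      have hσ : (if j = i then (t:ℝ) ^ 3 else 0) = t ^ 3 * (if j = i then 1 else 0) := by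
        split_ifs <;> ring
      have h := class_key' (Finset.univ.filter (fun w => ψ w = j)) n hn1 (hF j)
        (fun w => if w = v then (1:ℝ) else 0) (fun w => A w (Sum.inl (v, i))) t
        (if j = i then 1 else 0) ht0
      rw [hK] at h
      rw [hσ]
      exact h
    calc 2 * κ = κ * 2 := by ring
    _ ≤ κ * ∑ j : Fin 3,
        ((if j = i then (1:ℝ) else 0) - (if ψ v = j then 1 else 0)) ^ 2 :=
      mul_le_mul_of_nonneg_left (fin3_vert i (ψ v) hiv) hκ0.le
    _ = ∑ j : Fin 3,
        κ * ((if j = i then (1:ℝ) else 0) - (if ψ v = j then 1 else 0)) ^ 2 :=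
      Finset.mul_sum _ _ _
    _ ≤ _ := by
      refine le_trans (Finset.sum_le_sum fun j _ => hterm j) ?_
      norm_num
  -- edge-column lower bound
  have hedge : ∀ (u v : V) (huv : G.Adj u v) (hmem : s(u, v) ∈ G.edgeSet),
      t ^ 2 + (if ψ u = ψ v then 3 else 1) * (t ^ 4 * κ)
        ≤ ∑ r, R r (Sum.inr ⟨s(u, v), hmem⟩) ^ 2 := by
    intro u v huv hmem
    have hne : u ≠ v := huv.ne
    rw [hcolsum (Sum.inr ⟨s(u, v), hmem⟩)]
    simp only [MG]
    set c : (V × Fin 3) ⊕ G.edgeSet := Sum.inr ⟨s(u, v), hmem⟩ with hc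
    have hterm : ∀ j : Fin 3,
        κ * (t ^ 4 * ((1:ℝ) - (if ψ u = j then 1 else 0) - (if ψ v = j then 1 else 0)) ^ 2) ≤
          (∑ w ∈ Finset.univ.filter (fun w => ψ w = j),
              ((if w ∈ (s(u, v) : Sym2 V) then t ^ 2 else 0) - A w c) ^ 2)
            + (t ^ 5 - t ^ 3 * ∑ w ∈ Finset.univ.filter (fun w => ψ w = j), A w c) ^ 2 := by
      intro j
      have hmemw : ∀ w : V, ((if w ∈ (s(u, v) : Sym2 V) then (t:ℝ) ^ 2 else 0))
          = (if w = u then t ^ 2 else 0) + (if w = v then t ^ 2 else 0) := by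
        intro w
        by_cases h1 : w = u <;> by_cases h2 : w = v
        · exact absurd (h1.symm.trans h2) hne
        · simp [Sym2.mem_iff, h1, h2, hne, Ne.symm hne]
        · simp [Sym2.mem_iff, h1, h2, hne, Ne.symm hne]
        · simp [Sym2.mem_iff, h1, h2, hne, Ne.symm hne]
      have hK : ∑ w ∈ Finset.univ.filter (fun w => ψ w = j),
          (if w ∈ (s(u, v) : Sym2 V) then (t:ℝ) ^ 2 else 0)
          = (if ψ u = j then t ^ 2 else 0) + (if ψ v = j then t ^ 2 else 0) := by
        rw [Finset.sum_congr rfl fun w _ => hmemw w, Finset.sum_add_distrib,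
          Finset.sum_ite_eq' (Finset.univ.filter (fun w => ψ w = j)) u (fun _ => (t:ℝ) ^ 2),
          Finset.sum_ite_eq' (Finset.univ.filter (fun w => ψ w = j)) v (fun _ => (t:ℝ) ^ 2)]
        simp [Finset.mem_filter]
      have h := class_key' (Finset.univ.filter (fun w => ψ w = j)) n hn1 (hF j)
        (fun w => if w ∈ (s(u, v) : Sym2 V) then (t:ℝ) ^ 2 else 0) (fun w => A w c) t
        (t ^ 2) ht0
      rw [hK] at h
      have heq1 : t ^ 3 * t ^ 2 = t ^ 5 := by ring
      rw [heq1] at h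
      refine le_trans (le_of_eq ?_) h
      have : (t:ℝ) ^ 2 - ((if ψ u = j then t ^ 2 else 0) + (if ψ v = j then t ^ 2 else 0))
          = t ^ 2 * ((1:ℝ) - (if ψ u = j then 1 else 0) - (if ψ v = j then 1 else 0)) := by
        split_ifs <;> ring
      rw [this]
      ring
    calc t ^ 2 + (if ψ u = ψ v then 3 else 1) * (t ^ 4 * κ)
        ≤ t ^ 2 + (κ * t ^ 4) * ∑ j : Fin 3,
            ((1:ℝ) - (if ψ u = j then 1 else 0) - (if ψ v = j then 1 else 0)) ^ 2 := by
          have h := fin3_edge (ψ u) (ψ v)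
          have hpos : (0:ℝ) ≤ κ * t ^ 4 := by positivity
          nlinarith [mul_le_mul_of_nonneg_left h hpos]
    _ = (∑ j : Fin 3, κ * (t ^ 4 *
            ((1:ℝ) - (if ψ u = j then 1 else 0) - (if ψ v = j then 1 else 0)) ^ 2)) + t ^ 2 := by
          rw [Finset.mul_sum, add_comm]
          congr 1
          exact Finset.sum_congr rfl fun j _ => by ring
    _ ≤ _ := by
          refine add_le_add (Finset.sum_le_sum fun j _ => hterm j) (le_of_eq (by ring))
  -- total over columns
  have hcardE : (Finset.univ : Finset G.edgeSet).card = m := by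
    rw [hm, Finset.card_univ, SimpleGraph.edgeFinset, Set.toFinset_card]
  set e₀ : G.edgeSet := ⟨s(u₀, v₀), (G.mem_edgeSet).2 hadj⟩ with he₀
  have hEbound : (m:ℝ) * (t ^ 2 + t ^ 4 * κ) + 2 * (t ^ 4 * κ)
      ≤ ∑ e : G.edgeSet, ∑ r, R r (Sum.inr e) ^ 2 := by
    have hlow : ∀ e : G.edgeSet,
        (t ^ 2 + t ^ 4 * κ) + (if e = e₀ then 2 * (t ^ 4 * κ) else 0)
          ≤ ∑ r, R r (Sum.inr e) ^ 2 := by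
      rintro ⟨e, he⟩
      revert he
      induction e using Sym2.ind with
      | _ u v =>
        intro he
        have huv : G.Adj u v := (G.mem_edgeSet).1 he
        have h := hedge u v huv he
        have hκt : (0:ℝ) ≤ t ^ 4 * κ := by positivity
        rcases eq_or_ne (⟨s(u, v), he⟩ : G.edgeSet) e₀ with heq | hneq
        · rw [if_pos heq]
          refine le_trans ?_ h
          have hbad : ψ u = ψ v := by
            have hsym : s(u, v) = s(u₀, v₀) := congrArg Subtype.val heq
            rcases (Sym2.eq_iff).1 hsym with ⟨h1, h2⟩ | ⟨h1, h2⟩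
            · rw [h1, h2]; exact hcol
            · rw [h1, h2]; exact hcol.symm
          rw [if_pos hbad]
          linarith
        · rw [if_neg hneq]
          refine le_trans ?_ h
          split_ifs with hb
          · linarith
          · linarith
    calc (m:ℝ) * (t ^ 2 + t ^ 4 * κ) + 2 * (t ^ 4 * κ)
        = ∑ e : G.edgeSet,
            ((t ^ 2 + t ^ 4 * κ) + (if e = e₀ then 2 * (t ^ 4 * κ) else 0)) := by
          rw [Finset.sum_add_distrib, Finset.sum_const, Finset.sum_ite_eq' Finset.univ e₀
            (fun _ => 2 * (t ^ 4 * κ)), if_pos (Finset.mem_univ e₀), hcardE]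
          simp only [nsmul_eq_mul]
          try ring
    _ ≤ _ := Finset.sum_le_sum fun e _ => hlow e
  have hVbound : 4 * (n:ℝ) * κ ≤ ∑ p : V × Fin 3, ∑ r, R r (Sum.inl p) ^ 2 := by
    calc 4 * (n:ℝ) * κ = ∑ _v : V, 2 * (2 * κ) := by
          rw [Finset.sum_const, Finset.card_univ, ← hn, nsmul_eq_mul]
          ring
    _ = ∑ v : V, ∑ i : Fin 3, (if i = ψ v then 0 else 2 * κ) := by
          exact Finset.sum_congr rfl fun v _ => (fin3_count (ψ v) (2 * κ)).symm
    _ ≤ ∑ v : V, ∑ i : Fin 3, ∑ r, R r (Sum.inl (v, i)) ^ 2 :=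
          Finset.sum_le_sum fun v _ => Finset.sum_le_sum fun i _ => hvert v i
    _ = _ := by rw [Fintype.sum_prod_type]
  -- final arithmetic
  have hkey : 4 * (n:ℝ) * t ^ 6 + m * t ^ 10 < (4 * n + (m + 2) * t ^ 4) * κ := by
    rw [hκ, ← mul_div_assoc, lt_div_iff₀ hden]
    have h1 : ((n:ℝ) * t) * ((n:ℝ) * t) ≤ (1/16) * (1/16) :=
      mul_le_mul hnt hnt (by positivity) (by norm_num)
    have h2 : ((m:ℝ) * t) * ((n:ℝ) * t) ≤ (1/16) * (1/16) :=
      mul_le_mul hmt hnt (by positivity) (by norm_num)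
    have h3 : t ^ 4 ≤ 1 := pow_le_one₀ ht0.le ht1
    have hb : 4 * ((n:ℝ) * t) ^ 2 + (((m:ℝ) * t) * ((n:ℝ) * t)) * t ^ 4 ≤ 1 := by
      nlinarith [mul_nonneg (mul_nonneg hm0 ht0.le) (mul_nonneg hn0 ht0.le)]
    have ht10 : (0:ℝ) < t ^ 10 := by positivity
    nlinarith [mul_le_mul_of_nonneg_left hb ht10.le, ht10]
  have main : (m:ℝ) * t ^ 2 + 4 * n * t ^ 6 + m * t ^ 10 < ∑ c, ∑ r, R r c ^ 2 := by
    have hsplit : (∑ c : (V × Fin 3) ⊕ G.edgeSet, ∑ r, R r c ^ 2)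
        = (∑ p : V × Fin 3, ∑ r, R r (Sum.inl p) ^ 2)
          + ∑ e : G.edgeSet, ∑ r, R r (Sum.inr e) ^ 2 :=
      Fintype.sum_sum_type _
    rw [hsplit]
    have : (m:ℝ) * t ^ 2 + 4 * n * t ^ 6 + m * t ^ 10
        < 4 * (n:ℝ) * κ + ((m:ℝ) * (t ^ 2 + t ^ 4 * κ) + 2 * (t ^ 4 * κ)) := by
      have hexp : 4 * (n:ℝ) * κ + ((m:ℝ) * (t ^ 2 + t ^ 4 * κ) + 2 * (t ^ 4 * κ))
          = (m:ℝ) * t ^ 2 + (4 * n + (m + 2) * t ^ 4) * κ := by ring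
      rw [hexp]
      linarith
    linarith [hVbound, hEbound]
  rw [gt_iff_lt, frob]
  apply Real.sqrt_lt_sqrt (by positivity)
  rw [Finset.sum_comm]
  exact main
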